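/- Let U : Fin n × Fin n → MvPolynomial (Fin n) K and let ψ_U : M_n → M_n be the inner automorphism ψ_U(v) = v + [v,(0,U)] of the concrete model M_n. Then ψ_U maps every symmetric element of M_n to a symmetric element if and only if U decomposes as U = U₁ + U₂ where Σ_k (U₁(t,k) − U₁(k,t))·X_k = 0 for every t ∈ Fin n (i.e., (0,U₁) lies in the annihilator Ann(L_n)) and rename σ (U₂(i,j)) = U₂(σ(i),σ(j)) for every σ ∈ Equiv.Perm (Fin n) and all i, j (i.e., (0,U₂) is a symmetric element of the commutator ideal). -/

import Mathlib

open MvPolynomial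

/-- The bracket on the concrete model `M_n` of the free metabelian Leibniz
algebra `L_n`; here `(α, P)` represents
`Σ_i α_i x_i + Σ_{(i,j)} [x_i,x_j]·P(i,j)(r_1,…,r_n)`. -/
noncomputable def lbBracket {K : Type*} [Field K] {n : ℕ}
    (v w : (Fin n → K) × (Fin n × Fin n → MvPolynomial (Fin n) K)) :
    (Fin n → K) × (Fin n × Fin n → MvPolynomial (Fin n) K) :=
  (0, fun p =>
    C (v.1 p.1 * w.1 p.2)
      + v.2 p * (∑ k, C (w.1 k) * X k)
      + C (v.1 p.1) * (∑ k, (w.2 (p.2, k) - w.2 (k, p.2)) * X k))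

/-- The action of `σ ∈ Equiv.Perm (Fin n)` on the concrete model `M_n`,
corresponding to the substitution `x_i ↦ x_{σ(i)}`. -/
noncomputable def permAct {K : Type*} [Field K] {n : ℕ} (σ : Equiv.Perm (Fin n))
    (v : (Fin n → K) × (Fin n × Fin n → MvPolynomial (Fin n) K)) :
    (Fin n → K) × (Fin n × Fin n → MvPolynomial (Fin n) K) :=
  (v.1 ∘ ⇑σ⁻¹, fun p => rename ⇑σ (v.2 (σ⁻¹ p.1, σ⁻¹ p.2)))

section Aux
variable {K : Type*} [Field K] {n : ℕ}

/-- `Ssum U t = Σ_k (U(t,k) − U(k,t))·X_k`. -/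
noncomputable def Ssum (U : Fin n × Fin n → MvPolynomial (Fin n) K) (t : Fin n) :
    MvPolynomial (Fin n) K := ∑ k, (U (t, k) - U (k, t)) * X k

lemma rename_Ssum (σ : Equiv.Perm (Fin n)) (U : Fin n × Fin n → MvPolynomial (Fin n) K)
    (s : Fin n) :
    rename ⇑σ (Ssum U s) =
      ∑ k, (rename ⇑σ (U (s, σ⁻¹ k)) - rename ⇑σ (U (σ⁻¹ k, s))) * X k := by
  rw [Ssum, map_sum]
  refine Fintype.sum_equiv σ _ _ fun k => ?_
  simp

lemma Ssum_symm (U₂ : Fin n × Fin n → MvPolynomial (Fin n) K)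
    (h : ∀ (σ : Equiv.Perm (Fin n)) (i j : Fin n),
      rename (⇑σ) (U₂ (i, j)) = U₂ (σ i, σ j))
    (σ : Equiv.Perm (Fin n)) (t : Fin n) :
    rename ⇑σ (Ssum U₂ (σ⁻¹ t)) = Ssum U₂ t := by
  rw [rename_Ssum]
  refine Finset.sum_congr rfl fun k _ => ?_
  rw [h, h]
  simp

lemma Ssum_add (U₁ U₂ : Fin n × Fin n → MvPolynomial (Fin n) K) (t : Fin n) :
    Ssum (U₁ + U₂) t = Ssum U₁ t + Ssum U₂ t := by
  simp only [Ssum, Pi.add_apply, ← Finset.sum_add_distrib]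
  exact Finset.sum_congr rfl fun k _ => by ring

lemma Ssum_sub (U₁ U₂ : Fin n × Fin n → MvPolynomial (Fin n) K) (t : Fin n) :
    Ssum (U₁ - U₂) t = Ssum U₁ t - Ssum U₂ t := by
  simp only [Ssum, Pi.sub_apply, ← Finset.sum_sub_distrib]
  exact Finset.sum_congr rfl fun k _ => by ring

/-- Symmetrization of `U` by averaging over the symmetric group. -/
noncomputable def avgU (U : Fin n × Fin n → MvPolynomial (Fin n) K) :
    Fin n × Fin n → MvPolynomial (Fin n) K :=
  fun p => ((n.factorial : K)⁻¹) •
    ∑ σ : Equiv.Perm (Fin n), rename ⇑σ (U (σ⁻¹ p.1, σ⁻¹ p.2))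

lemma avgU_symm (U : Fin n × Fin n → MvPolynomial (Fin n) K)
    (τ : Equiv.Perm (Fin n)) (i j : Fin n) :
    rename (⇑τ) (avgU U (i, j)) = avgU U (τ i, τ j) := by
  simp only [avgU, smul_eq_C_mul, map_mul, rename_C, map_sum, rename_rename]
  congr 1
  refine Fintype.sum_equiv (Equiv.mulLeft τ) _ _ fun σ => ?_
  simp [Equiv.Perm.coe_mul, mul_inv_rev, Equiv.Perm.mul_apply]

lemma Ssum_avgU [CharZero K] (U : Fin n × Fin n → MvPolynomial (Fin n) K)
    (h : ∀ (σ : Equiv.Perm (Fin n)) (t : Fin n),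
      rename ⇑σ (Ssum U (σ⁻¹ t)) = Ssum U t) (t : Fin n) :
    Ssum (avgU U) t = Ssum U t := by
  have key : ∀ σ : Equiv.Perm (Fin n),
      ∑ k, (rename ⇑σ (U (σ⁻¹ t, σ⁻¹ k)) - rename ⇑σ (U (σ⁻¹ k, σ⁻¹ t))) * X k
        = Ssum U t := fun σ => by rw [← rename_Ssum, h]
  have : Ssum (avgU U) t
      = ((n.factorial : K)⁻¹) • ∑ σ : Equiv.Perm (Fin n),
          ∑ k, (rename ⇑σ (U (σ⁻¹ t, σ⁻¹ k)) - rename ⇑σ (U (σ⁻¹ k, σ⁻¹ t))) * X k := by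
    rw [Ssum]
    simp only [avgU, ← smul_sub, ← Finset.sum_sub_distrib, smul_mul_assoc,
      Finset.sum_mul]
    rw [← Finset.smul_sum, Finset.sum_comm]
  rw [this]
  simp only [key, Finset.sum_const, Finset.card_univ, Fintype.card_perm,
    Fintype.card_fin]
  rw [← Nat.cast_smul_eq_nsmul K, smul_smul,
    inv_mul_cancel₀ (Nat.cast_ne_zero.mpr n.factorial_ne_zero), one_smul]

end Aux

/-- The inner automorphism `ψ_U : v ↦ v + [v, (0,U)]` of the concrete model `M_n`
maps every symmetric element to a symmetric element iff `U = U₁ + U₂` where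
`(0, U₁)` lies in the annihilator (i.e. `Σ_k (U₁(t,k) − U₁(k,t))·X_k = 0` for
every `t`) and `(0, U₂)` is a symmetric element of the commutator ideal (i.e.
`rename σ (U₂(i,j)) = U₂(σ i, σ j)` for every `σ` and all `i, j`). -/
theorem model_inner_automorphism_preserves_symmetric_iff
    {K : Type*} [Field K] [CharZero K] {n : ℕ} [NeZero n] (hn : 2 ≤ n)
    (U : Fin n × Fin n → MvPolynomial (Fin n) K) :
    (∀ v : (Fin n → K) × (Fin n × Fin n → MvPolynomial (Fin n) K),
        (∀ σ : Equiv.Perm (Fin n), permAct σ v = v) →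
        (∀ σ : Equiv.Perm (Fin n),
          permAct σ (v + lbBracket v (0, U)) = v + lbBracket v (0, U))) ↔
      (∃ U₁ U₂ : Fin n × Fin n → MvPolynomial (Fin n) K,
        U = U₁ + U₂ ∧
        (∀ t : Fin n, ∑ k, (U₁ (t, k) - U₁ (k, t)) * X k = 0) ∧
        (∀ (σ : Equiv.Perm (Fin n)) (i j : Fin n),
          rename (⇑σ) (U₂ (i, j)) = U₂ (σ i, σ j))) := by
  have hred : (∀ v : (Fin n → K) × (Fin n × Fin n → MvPolynomial (Fin n) K),
        (∀ σ : Equiv.Perm (Fin n), permAct σ v = v) →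
        (∀ σ : Equiv.Perm (Fin n),
          permAct σ (v + lbBracket v (0, U)) = v + lbBracket v (0, U))) ↔
      (∀ (σ : Equiv.Perm (Fin n)) (t : Fin n),
        rename ⇑σ (Ssum U (σ⁻¹ t)) = Ssum U t) := by
    constructor
    · intro H σ t
      have hv : ∀ τ : Equiv.Perm (Fin n),
          permAct τ (((fun _ => (1 : K)), 0) :
            (Fin n → K) × (Fin n × Fin n → MvPolynomial (Fin n) K))
            = ((fun _ => 1), 0) := by
        intro τ
        refine Prod.ext rfl ?_
        funext q
        simp [permAct]
      have hb : ∀ q : Fin n × Fin n,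
          (lbBracket (((fun _ => (1 : K)), 0) :
            (Fin n → K) × (Fin n × Fin n → MvPolynomial (Fin n) K))
            ((0 : Fin n → K), U)).2 q = Ssum U q.2 := by
        intro q
        simp [lbBracket, Ssum]
      have h := congrArg (fun w => w.2 (t, t)) (H _ hv σ)
      simpa [permAct, Prod.snd_add, Pi.add_apply, hb] using h
    · intro hS v hv σ
      have h1 : ∀ i, v.1 (σ⁻¹ i) = v.1 i :=
        fun i => congrFun (congrArg Prod.fst (hv σ)) i
      have h2 : ∀ q : Fin n × Fin n,
          rename ⇑σ (v.2 (σ⁻¹ q.1, σ⁻¹ q.2)) = v.2 q :=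
        fun q => congrFun (congrArg Prod.snd (hv σ)) q
      have hb : ∀ q : Fin n × Fin n,
          (lbBracket v ((0 : Fin n → K), U)).2 q = C (v.1 q.1) * Ssum U q.2 := by
        intro q
        simp [lbBracket, Ssum]
      refine Prod.ext ?_ ?_
      · funext i
        show (v + lbBracket v ((0 : Fin n → K), U)).1 (σ⁻¹ i)
          = (v + lbBracket v ((0 : Fin n → K), U)).1 i
        simp [lbBracket, h1 i]
        exact h1 i
      · funext p
        show rename ⇑σ ((v + lbBracket v ((0 : Fin n → K), U)).2 (σ⁻¹ p.1, σ⁻¹ p.2))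
          = (v + lbBracket v ((0 : Fin n → K), U)).2 p
        simp only [Prod.snd_add, Pi.add_apply, hb, map_add, map_mul, rename_C]
        rw [h2 p, h1 p.1, hS σ p.2]
  rw [hred]
  constructor
  · intro h
    refine ⟨U - avgU U, avgU U, by abel, fun t => ?_, avgU_symm U⟩
    show Ssum (U - avgU U) t = 0
    rw [Ssum_sub, Ssum_avgU U h t, sub_self]
  · rintro ⟨U₁, U₂, hU, h1, h2⟩ σ t
    subst hU
    have e1 : Ssum U₁ (σ⁻¹ t) = 0 := h1 (σ⁻¹ t)
    have e2 : Ssum U₁ t = 0 := h1 t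
    rw [Ssum_add, Ssum_add, e1, e2, zero_add, zero_add]
    exact Ssum_symm U₂ h2 σ t
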